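/- Fix α > 0 and λ1, λ2 > 0 with λ = λ1 + λ2, and write c = (1 + 1/α)^{α+1}. Then for every μ > 0, the gamma-service correlation coefficient satisfies CC(μ) ≥ CC(α·λ) = −2·λ1·λ2 / (λ · sqrt((c·λ − 2·λ1)·(c·λ − 2·λ2))); that is, over all μ > 0 the correlation coefficient is minimized at μ = α·λ. -/

import Mathlib

open Filter Real

/-- Correlation coefficient of the two stationary AoIs in the two-source M/G/1/1
pushout server with common gamma(α, μ) service times and arrival rates `l1, l2`. -/
noncomputable def gammaAoiCC (α l1 l2 μ : ℝ) : ℝ :=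
  -(2 * α * l1 * l2) / ((l1 + l2) *
    Real.sqrt (((μ + (l1 + l2)) ^ (α + 1) / μ ^ α - 2 * α * l1) *
      ((μ + (l1 + l2)) ^ (α + 1) / μ ^ α - 2 * α * l2)))

lemma aoi_aux_at_min (α lam : ℝ) (hα : 0 < α) (hlam : 0 < lam) :
    (α * lam + lam) ^ (α + 1) / (α * lam) ^ α = α * ((1 + 1 / α) ^ (α + 1) * lam) := by
  have hα1 : (0:ℝ) < α + 1 := by linarith
  have h1 : (1:ℝ) + 1 / α = (α + 1) / α := by field_simp
  have hmul1 : (α * lam + lam) ^ (α + 1) = ((α + 1) * lam) ^ (α + 1) := by ring_nf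
  rw [hmul1, h1, Real.mul_rpow hα1.le hlam.le, Real.mul_rpow hα.le hlam.le,
    Real.div_rpow hα1.le hα.le, Real.rpow_add_one hα.ne' α, Real.rpow_add_one hlam.ne' α]
  have hαα : (0:ℝ) < α ^ α := Real.rpow_pos_of_pos hα α
  have hll : (0:ℝ) < lam ^ α := Real.rpow_pos_of_pos hlam α
  field_simp

lemma aoi_aux_min (α lam μ : ℝ) (hα : 0 < α) (hlam : 0 < lam) (hμ : 0 < μ) :
    α * ((1 + 1 / α) ^ (α + 1) * lam) ≤ (μ + lam) ^ (α + 1) / μ ^ α := by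
  have hα1 : (0:ℝ) < α + 1 := by linarith
  set p1 : ℝ := μ * ((α + 1) / α) with hp1def
  set p2 : ℝ := lam * (α + 1) with hp2def
  have hp1 : 0 < p1 := by positivity
  have hp2 : 0 < p2 := by positivity
  have hw : α / (α + 1) + 1 / (α + 1) = 1 := by field_simp
  have hgm := Real.geom_mean_le_arith_mean2_weighted
    (by positivity : (0:ℝ) ≤ α / (α + 1)) (by positivity : (0:ℝ) ≤ 1 / (α + 1))
    hp1.le hp2.le hw
  have hrhs : α / (α + 1) * p1 + 1 / (α + 1) * p2 = μ + lam := by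
    rw [hp1def, hp2def]; field_simp
  rw [hrhs] at hgm
  have hbase : 0 ≤ p1 ^ (α / (α + 1)) * p2 ^ (1 / (α + 1)) := by positivity
  have hpow := Real.rpow_le_rpow hbase hgm hα1.le
  rw [Real.mul_rpow (by positivity) (by positivity)] at hpow
  rw [← Real.rpow_mul hp1.le, ← Real.rpow_mul hp2.le] at hpow
  have he1 : α / (α + 1) * (α + 1) = α := by field_simp
  have he2 : 1 / (α + 1) * (α + 1) = 1 := by field_simp
  rw [he1, he2, Real.rpow_one] at hpow
  -- hpow : p1 ^ α * p2 ≤ (μ + lam) ^ (α + 1)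
  have hp1α : p1 ^ α = μ ^ α * ((α + 1) / α) ^ α := Real.mul_rpow hμ.le (by positivity)
  rw [hp1α, hp2def] at hpow
  have hμα : (0:ℝ) < μ ^ α := Real.rpow_pos_of_pos hμ α
  rw [le_div_iff₀ hμα]
  have h1 : (1:ℝ) + 1 / α = (α + 1) / α := by field_simp
  have hc : α * ((α + 1) / α) ^ (α + 1) = (α + 1) * ((α + 1) / α) ^ α := by
    rw [Real.rpow_add_one (by positivity : (0:ℝ) < (α + 1) / α).ne' α]
    field_simp
  rw [h1]
  calc α * (((α + 1) / α) ^ (α + 1) * lam) * μ ^ α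
      = μ ^ α * ((α + 1) / α) ^ α * (lam * (α + 1)) := by linear_combination lam * μ ^ α * hc
    _ ≤ (μ + lam) ^ (α + 1) := hpow

lemma aoi_aux_c_gt_two (α : ℝ) (hα : 0 < α) : 2 < (1 + 1 / α) ^ (α + 1) := by
  have hb := one_add_mul_self_le_rpow_one_add
    (by have := one_div_pos.2 hα; linarith : (-1:ℝ) ≤ 1 / α) (by linarith : (1:ℝ) ≤ α + 1)
  have : 1 + (α + 1) * (1 / α) = 2 + 1 / α := by field_simp; ring
  rw [this] at hb
  have h0 : 0 < 1 / α := by positivity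
  linarith

/-- With `c = (1 + 1/α)^(α+1)`, the gamma-service AoI correlation coefficient is
minimized over `μ > 0` at `μ = α·λ`, where it equals
`−2·λ1·λ2/(λ·sqrt((c·λ − 2·λ1)·(c·λ − 2·λ2)))`. -/
theorem gammaAoiCC_min_at_alpha_lambda (α lam1 lam2 : ℝ) (hα : 0 < α)
    (hlam1 : 0 < lam1) (hlam2 : 0 < lam2) :
    gammaAoiCC α lam1 lam2 (α * (lam1 + lam2)) =
      -(2 * lam1 * lam2) / ((lam1 + lam2) *
        Real.sqrt (((1 + 1 / α) ^ (α + 1) * (lam1 + lam2) - 2 * lam1) *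
          ((1 + 1 / α) ^ (α + 1) * (lam1 + lam2) - 2 * lam2))) ∧
    ∀ μ : ℝ, 0 < μ →
      -(2 * lam1 * lam2) / ((lam1 + lam2) *
          Real.sqrt (((1 + 1 / α) ^ (α + 1) * (lam1 + lam2) - 2 * lam1) *
            ((1 + 1 / α) ^ (α + 1) * (lam1 + lam2) - 2 * lam2))) ≤
        gammaAoiCC α lam1 lam2 μ := by
  set lam : ℝ := lam1 + lam2 with hlamdef
  have hlam : 0 < lam := by positivity
  set c : ℝ := (1 + 1 / α) ^ (α + 1) with hcdef
  have hc2 : 2 < c := aoi_aux_c_gt_two α hα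
  have hf1 : 0 < c * lam - 2 * lam1 := by nlinarith
  have hf2 : 0 < c * lam - 2 * lam2 := by nlinarith
  set Pmin : ℝ := (c * lam - 2 * lam1) * (c * lam - 2 * lam2) with hPdef
  have hP : 0 < Pmin := mul_pos hf1 hf2
  have hsP : 0 < Real.sqrt Pmin := Real.sqrt_pos.2 hP
  have key : ∀ μ : ℝ, 0 < μ → gammaAoiCC α lam1 lam2 μ =
      -(2 * α * lam1 * lam2) / (lam * Real.sqrt
        (((μ + lam) ^ (α + 1) / μ ^ α - 2 * α * lam1) *
         ((μ + lam) ^ (α + 1) / μ ^ α - 2 * α * lam2))) := fun μ _ => rfl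
  have hEq : gammaAoiCC α lam1 lam2 (α * lam) =
      -(2 * lam1 * lam2) / (lam * Real.sqrt Pmin) := by
    rw [key (α * lam) (by positivity)]
    rw [aoi_aux_at_min α lam hα hlam]
    have h1 : α * (c * lam) - 2 * α * lam1 = α * (c * lam - 2 * lam1) := by ring
    have h2 : α * (c * lam) - 2 * α * lam2 = α * (c * lam - 2 * lam2) := by ring
    rw [h1, h2, show α * (c * lam - 2 * lam1) * (α * (c * lam - 2 * lam2))
        = α ^ 2 * Pmin by rw [hPdef]; ring,
      Real.sqrt_mul (sq_nonneg α), Real.sqrt_sq hα.le,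
      show lam * (α * Real.sqrt Pmin) = α * (lam * Real.sqrt Pmin) by ring,
      show -(2 * α * lam1 * lam2) = α * (-(2 * lam1 * lam2)) by ring,
      mul_div_mul_left _ _ hα.ne']
  refine ⟨hEq, fun μ hμ => ?_⟩
  rw [key μ hμ, ← hEq, hEq]
  set f : ℝ := (μ + lam) ^ (α + 1) / μ ^ α with hfdef
  have hfmin : α * (c * lam) ≤ f := by
    have := aoi_aux_min α lam μ hα hlam hμ
    rw [← hfdef, ← hcdef] at this
    exact this
  have hg1 : α * (c * lam - 2 * lam1) ≤ f - 2 * α * lam1 := by nlinarith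
  have hg2 : α * (c * lam - 2 * lam2) ≤ f - 2 * α * lam2 := by nlinarith
  have hg1' : 0 < f - 2 * α * lam1 := lt_of_lt_of_le (by positivity) hg1
  have hg2' : 0 < f - 2 * α * lam2 := lt_of_lt_of_le (by positivity) hg2
  have hprod : α ^ 2 * Pmin ≤ (f - 2 * α * lam1) * (f - 2 * α * lam2) := by
    calc α ^ 2 * Pmin = (α * (c * lam - 2 * lam1)) * (α * (c * lam - 2 * lam2)) := by
          rw [hPdef]; ring
      _ ≤ (f - 2 * α * lam1) * (f - 2 * α * lam2) :=
          mul_le_mul hg1 hg2 (by positivity) hg1'.le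
  have hsqrt : α * Real.sqrt Pmin ≤
      Real.sqrt ((f - 2 * α * lam1) * (f - 2 * α * lam2)) := by
    have := Real.sqrt_le_sqrt hprod
    rwa [Real.sqrt_mul (sq_nonneg α), Real.sqrt_sq hα.le] at this
  have hD1 : 0 < lam * (α * Real.sqrt Pmin) := by positivity
  have hD2 : lam * (α * Real.sqrt Pmin) ≤
      lam * Real.sqrt ((f - 2 * α * lam1) * (f - 2 * α * lam2)) :=
    mul_le_mul_of_nonneg_left hsqrt hlam.le
  have hN : 0 < 2 * α * lam1 * lam2 := by positivity
  have hdiv : (2 * α * lam1 * lam2) /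
        (lam * Real.sqrt ((f - 2 * α * lam1) * (f - 2 * α * lam2)))
      ≤ (2 * α * lam1 * lam2) / (lam * (α * Real.sqrt Pmin)) :=
    div_le_div_of_nonneg_left hN.le hD1 hD2
  have hL : -(2 * lam1 * lam2) / (lam * Real.sqrt Pmin)
      = -(2 * α * lam1 * lam2) / (lam * (α * Real.sqrt Pmin)) := by
    rw [show lam * (α * Real.sqrt Pmin) = α * (lam * Real.sqrt Pmin) by ring,
      show -(2 * α * lam1 * lam2) = α * (-(2 * lam1 * lam2)) by ring,
      mul_div_mul_left _ _ hα.ne']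
  rw [hL, neg_div, neg_div, neg_le_neg_iff]
  exact hdiv
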